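/- Let P be a probability measure on ℝ̄ = [-∞,∞], λ the uniform distribution on [0,1], and P̄ := P ⊗ λ on ℝ̄ × [0,1]. Define E(x,u) := P([-∞,x)) + u·P({x}). Then E is uniformly distributed under P̄, i.e. P̄({(x,u) | E(x,u) ≤ e}) = e for every e ∈ [0,1]. -/

import Mathlib

open MeasureTheory

open Filter Topology Set
open scoped ENNReal

noncomputable def lam : Measure ℝ := volume.restrict (Set.Icc (0:ℝ) 1)

lemma sec_meas (a b e : ℝ) : MeasurableSet {u : ℝ | a + u * b ≤ e} :=
  measurableSet_le (by measurability) measurable_const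

lemma L1 {a b e : ℝ} (hb : 0 ≤ b) (h : a + b ≤ e) : lam {u : ℝ | a + u * b ≤ e} = 1 := by
  rw [lam, Measure.restrict_apply (sec_meas a b e)]
  have : {u : ℝ | a + u * b ≤ e} ∩ Set.Icc 0 1 = Set.Icc 0 1 := by
    apply Set.inter_eq_right.mpr
    intro u hu
    have := hu.1; have := hu.2
    simp only [Set.mem_setOf_eq]
    nlinarith
  rw [this, Real.volume_Icc]
  norm_num

lemma L2 {a b e : ℝ} (hb : 0 ≤ b) (h : e < a) : lam {u : ℝ | a + u * b ≤ e} = 0 := by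
  rw [lam, Measure.restrict_apply (sec_meas a b e)]
  have : {u : ℝ | a + u * b ≤ e} ∩ Set.Icc 0 1 = ∅ := by
    ext u
    simp only [Set.mem_inter_iff, Set.mem_setOf_eq, Set.mem_Icc, Set.mem_empty_iff_false, iff_false]
    rintro ⟨h1, h2, h3⟩
    nlinarith
  rw [this, measure_empty]

lemma L3 {b e : ℝ} (hb : 0 < b) : lam {u : ℝ | e + u * b ≤ e} = 0 := by
  rw [lam, Measure.restrict_apply (sec_meas e b e)]
  apply measure_mono_null (t := {(0:ℝ)})
  · rintro u ⟨h1, h2, h3⟩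
    simp only [Set.mem_setOf_eq] at h1
    have : u = 0 := by nlinarith
    simp [this]
  · exact measure_singleton 0

lemma L4 {a b e : ℝ} (hb : 0 < b) (h1 : a ≤ e) (h2 : e ≤ a + b) :
    lam {u : ℝ | a + u * b ≤ e} = ENNReal.ofReal ((e - a) / b) := by
  rw [lam, Measure.restrict_apply (sec_meas a b e)]
  have ht0 : 0 ≤ (e - a) / b := div_nonneg (by linarith) hb.le
  have ht1 : (e - a) / b ≤ 1 := by
    rw [div_le_one hb]; linarith
  have : {u : ℝ | a + u * b ≤ e} ∩ Set.Icc 0 1 = Set.Icc 0 ((e - a) / b) := by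
    ext u
    simp only [Set.mem_inter_iff, Set.mem_setOf_eq, Set.mem_Icc]
    constructor
    · rintro ⟨hu, h0, hu1⟩
      exact ⟨h0, (le_div_iff₀ hb).mpr (by linarith)⟩
    · rintro ⟨h0, hu⟩
      have := (le_div_iff₀ hb).mp hu
      exact ⟨by linarith, h0, le_trans hu ht1⟩
  rw [this, Real.volume_Icc, sub_zero]

lemma aux_null (P : Measure EReal) (x₀ : EReal) (s : Set EReal)
    (hs : ∀ y ∈ s, x₀ < y ∧ P (Set.Ioc x₀ y) = 0) : P s = 0 := by
  rcases s.eq_empty_or_nonempty with rfl | hne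
  · simp
  obtain ⟨y, hmono, htend, hmem⟩ := exists_seq_tendsto_sSup hne (OrderTop.bddAbove s)
  set t := sSup s with ht_def
  apply measure_mono_null (t := (⋃ n, Set.Ioc x₀ (y n)) ∪ (s ∩ {t}))
  · intro x hx
    rcases eq_or_lt_of_le (le_sSup hx) with h | h
    · exact Or.inr ⟨hx, h⟩
    · obtain ⟨n, hn⟩ := (htend.eventually (eventually_gt_nhds h)).exists
      exact Or.inl (Set.mem_iUnion.mpr ⟨n, (hs x hx).1, le_of_lt hn⟩)
  · apply measure_union_null
    · exact measure_iUnion_null fun n => (hs _ (hmem n)).2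
    · by_cases ht : t ∈ s
      · refine measure_mono_null ?_ (hs _ ht).2
        rintro x ⟨hxs, rfl⟩
        exact ⟨(hs _ hxs).1, le_refl _⟩
      · have : s ∩ {t} = ∅ := by
          ext x
          simp only [Set.mem_inter_iff, Set.mem_singleton_iff, Set.mem_empty_iff_false, iff_false]
          rintro ⟨hxs, rfl⟩
          exact ht hxs
        rw [this]; exact measure_empty


/-- Let `P` be a probability measure on `ℝ̄ = [-∞,∞]`, `λ` the uniform distribution on
`[0,1]` and `P̄ = P ⊗ λ`. Then the interpolated CDF `E(x,u) = P([-∞,x)) + u·P({x})` is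
uniformly distributed under `P̄`: `P̄(E ≤ e) = e` for every `e ∈ [0,1]`. -/
theorem stmt13 (P : Measure EReal) [IsProbabilityMeasure P]
    (E : EReal × ℝ → ℝ)
    (hE : ∀ x u, E (x, u) = (P (Set.Iio x)).toReal + u * (P {x}).toReal) :
    ∀ e ∈ Set.Icc (0 : ℝ) 1,
      (P.prod (volume.restrict (Set.Icc (0 : ℝ) 1))) {p | E p ≤ e} = ENNReal.ofReal e := by
  rintro e ⟨he0, he1⟩
  set e' := ENNReal.ofReal e with he'_def
  have hfin : ∀ s : Set EReal, P s ≠ ⊤ := fun s => measure_ne_top P s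
  set a : EReal → ℝ := fun x => (P (Set.Iio x)).toReal with ha_def
  set b : EReal → ℝ := fun x => (P {x}).toReal with hb_def
  have hb0 : ∀ x, 0 ≤ b x := fun x => ENNReal.toReal_nonneg
  -- split Iic into Iio ∪ {x}
  have hIicsplit : ∀ x : EReal, P (Set.Iic x) = P (Set.Iio x) + P {x} := by
    intro x
    rw [← Set.Iio_union_right, measure_union (by simp) (measurableSet_singleton x)]
  have hIic_toReal : ∀ x : EReal, (P (Set.Iic x)).toReal = a x + b x := by
    intro x
    rw [hIicsplit x, ENNReal.toReal_add (hfin _) (hfin _)]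
  -- measurability
  have hma : Measurable a := by
    have hmono : Monotone (fun x : EReal => P (Set.Iio x)) :=
      fun x y hxy => measure_mono (Set.Iio_subset_Iio hxy)
    exact ENNReal.measurable_toReal.comp hmono.measurable
  have hmb : Measurable b := by
    have hmono2 : Monotone (fun x : EReal => P (Set.Iic x)) :=
      fun x y hxy => measure_mono (Set.Iic_subset_Iic.mpr hxy)
    have hmono : Monotone (fun x : EReal => P (Set.Iio x)) :=
      fun x y hxy => measure_mono (Set.Iio_subset_Iio hxy)
    have heq : (fun x : EReal => P {x}) = fun x => P (Set.Iic x) - P (Set.Iio x) := by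
      ext x
      rw [hIicsplit x, ENNReal.add_sub_cancel_left (hfin _)]
    exact ENNReal.measurable_toReal.comp (heq ▸ hmono2.measurable.sub hmono.measurable)
  have hEeq : E = fun p : EReal × ℝ => a p.1 + p.2 * b p.1 := by
    funext p
    rcases p with ⟨x, u⟩
    exact hE x u
  have hAmeas : MeasurableSet {p : EReal × ℝ | E p ≤ e} := by
    rw [hEeq]
    exact measurableSet_le ((hma.comp measurable_fst).add
      (measurable_snd.mul (hmb.comp measurable_fst))) measurable_const
  rw [Measure.prod_apply hAmeas]
  have hsec : ∀ x : EReal, (volume.restrict (Set.Icc (0:ℝ) 1)) (Prod.mk x ⁻¹' {p : EReal × ℝ | E p ≤ e})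
      = lam {u : ℝ | a x + u * b x ≤ e} := by
    intro x
    rw [lam]
    congr 1
    ext u
    simp [hE x u]
    exact Iff.rfl
  rw [lintegral_congr hsec]
  set κ : EReal → ℝ≥0∞ := fun x => lam {u : ℝ | a x + u * b x ≤ e} with hκ_def
  -- the quantile point
  set S : Set EReal := {x | e' ≤ P (Set.Iic x)} with hS_def
  have hStop : (⊤ : EReal) ∈ S := by
    have : P (Set.Iic (⊤ : EReal)) = 1 := by rw [Set.Iic_top]; exact measure_univ
    simp only [hS_def, Set.mem_setOf_eq, this, he'_def]
    exact ENNReal.ofReal_le_one.mpr he1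
  set x₀ := sInf S with hx0_def
  have h1 : ∀ x, x < x₀ → P (Set.Iic x) < e' := by
    intro x hx
    by_contra h
    exact absurd (sInf_le (show x ∈ S from le_of_not_gt h)) (not_le.mpr hx)
  have h2 : e' ≤ P (Set.Iic x₀) := by
    obtain ⟨y, hanti, htend, hmem⟩ := exists_seq_tendsto_sInf ⟨⊤, hStop⟩ (OrderBot.bddBelow S)
    have hIic : Set.Iic x₀ = ⋂ n, Set.Iic (y n) := by
      ext z
      simp only [Set.mem_Iic, Set.mem_iInter]
      constructor
      · intro hz n; exact hz.trans (sInf_le (hmem n))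
      · intro hz; exact ge_of_tendsto htend (Filter.Eventually.of_forall hz)
    have hdir : Directed (· ⊇ ·) (fun n => Set.Iic (y n)) := by
      intro m n
      exact ⟨max m n, Set.Iic_subset_Iic.mpr (hanti (le_max_left m n)),
        Set.Iic_subset_Iic.mpr (hanti (le_max_right m n))⟩
    rw [hIic, Directed.measure_iInter (fun n => measurableSet_Iic.nullMeasurableSet) hdir
      ⟨0, hfin _⟩]
    exact le_iInf fun n => hmem n
  have h3 : P (Set.Iio x₀) ≤ e' := by
    by_cases hbot : x₀ = ⊥
    · rw [hbot]
      simp only [Set.Iio_bot, measure_empty]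
      exact zero_le
    · have hne : (Set.Iio x₀).Nonempty := ⟨⊥, bot_lt_iff_ne_bot.mpr hbot⟩
      obtain ⟨y, hmono, htend, hmem⟩ := exists_seq_tendsto_sSup hne (OrderTop.bddAbove _)
      have hs_le : sSup (Set.Iio x₀) ≤ x₀ := sSup_le fun z hz => le_of_lt hz
      rcases lt_or_eq_of_le hs_le with h | h
      · calc P (Set.Iio x₀) ≤ P (Set.Iic (sSup (Set.Iio x₀))) :=
              measure_mono fun z hz => show z ≤ sSup (Set.Iio x₀) from le_sSup hz
          _ ≤ e' := (h1 _ h).le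
      · have hsub : Set.Iio x₀ ⊆ ⋃ n, Set.Iic (y n) := by
          intro z hz
          have hzs : z < sSup (Set.Iio x₀) := by rw [h]; exact hz
          obtain ⟨n, hn⟩ := (htend.eventually (eventually_gt_nhds hzs)).exists
          exact Set.mem_iUnion.mpr ⟨n, hn.le⟩
        have hdir : Directed (· ⊆ ·) (fun n => Set.Iic (y n)) :=
          Monotone.directed_le (fun m n hmn => Set.Iic_subset_Iic.mpr (hmono hmn))
        calc P (Set.Iio x₀) ≤ P (⋃ n, Set.Iic (y n)) := measure_mono hsub
          _ = ⨆ n, P (Set.Iic (y n)) := hdir.measure_iUnion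
          _ ≤ e' := iSup_le fun n => (h1 _ (hmem n)).le
  -- decompose the integral
  have hIci : Set.Ici x₀ = {x₀} ∪ Set.Ioi x₀ := by
    ext z
    simp only [Set.mem_Ici, Set.mem_union, Set.mem_singleton_iff, Set.mem_Ioi]
    constructor
    · intro h; rcases eq_or_lt_of_le h with h | h
      · exact Or.inl h.symm
      · exact Or.inr h
    · rintro (rfl | h)
      · exact le_refl _
      · exact h.le
  have hdisj : Disjoint ({x₀} : Set EReal) (Set.Ioi x₀) := by
    rw [Set.disjoint_left]
    rintro z rfl hz
    exact lt_irrefl _ (Set.mem_Ioi.mp hz)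
  rw [← lintegral_add_compl κ (measurableSet_Iio (a := x₀)), Set.compl_Iio, hIci,
    lintegral_union measurableSet_Ioi hdisj, lintegral_singleton]
  -- piece 1
  have hpiece1 : ∫⁻ x in Set.Iio x₀, κ x ∂P = P (Set.Iio x₀) := by
    rw [setLIntegral_congr_fun_ae measurableSet_Iio (g := fun _ => 1)
      (Filter.Eventually.of_forall fun x hx => ?_), setLIntegral_one]
    have hlt : (P (Set.Iic x)).toReal < e := by
      rw [← ENNReal.lt_ofReal_iff_toReal_lt (hfin _)]
      exact h1 x hx
    rw [hIic_toReal] at hlt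
    exact L1 (hb0 x) hlt.le
  rw [hpiece1]
  -- piece 3
  have hW : P {y | x₀ < y ∧ P (Set.Iic y) ≤ e'} = 0 := by
    apply aux_null P x₀
    rintro y ⟨hy1, hy2⟩
    refine ⟨hy1, ?_⟩
    have hsplit2 : P (Set.Iic x₀) + P (Set.Ioc x₀ y) = P (Set.Iic y) := by
      rw [← Set.Iic_union_Ioc_eq_Iic hy1.le, measure_union ?_ measurableSet_Ioc]
      rw [Set.disjoint_left]
      rintro z hz1 hz2
      exact absurd hz2.1 (not_lt.mpr hz1)
    have : P (Set.Iic x₀) + P (Set.Ioc x₀ y) ≤ P (Set.Iic x₀) + 0 := by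
      rw [add_zero, hsplit2]
      exact hy2.trans h2
    exact le_zero_iff.mp ((ENNReal.add_le_add_iff_left (hfin _)).mp this)
  have hpiece3 : ∫⁻ x in Set.Ioi x₀, κ x ∂P = 0 := by
    rw [setLIntegral_congr_fun_ae measurableSet_Ioi (g := fun _ => 0) ?_, lintegral_zero]
    have hWae : ∀ᵐ x ∂P, ¬(x₀ < x ∧ P (Set.Iic x) ≤ e') := by
      rw [ae_iff]
      simpa using hW
    filter_upwards [hWae] with x hxW hxIoi
    have hge : e' ≤ P (Set.Iio x) :=
      le_trans h2 (measure_mono fun z hz => show z < x from lt_of_le_of_lt hz hxIoi)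
    have hIicx : e' < P (Set.Iic x) := lt_of_not_ge fun hc => hxW ⟨hxIoi, hc⟩
    rcases eq_or_lt_of_le hge with heq | hlt
    · have hax : a x = e := by
        rw [ha_def]
        simp only
        rw [← heq, he'_def, ENNReal.toReal_ofReal he0]
      have hbx : 0 < b x := by
        apply ENNReal.toReal_pos ?_ (hfin _)
        intro hz
        rw [hIicsplit x, hz, add_zero, ← heq] at hIicx
        exact lt_irrefl _ hIicx
      rw [hκ_def]
      simp only
      rw [hax]
      exact L3 hbx
    · have hax : e < a x := by
        rw [he'_def, ENNReal.ofReal_lt_iff_lt_toReal he0 (hfin _)] at hlt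
        exact hlt
      exact L2 (hb0 x) hax
  rw [hpiece3, add_zero]
  -- piece 2 and assembly
  by_cases hm : P {x₀} = 0
  · rw [hm, mul_zero, add_zero]
    apply le_antisymm h3
    calc e' ≤ P (Set.Iic x₀) := h2
      _ = P (Set.Iio x₀) + P {x₀} := hIicsplit x₀
      _ = P (Set.Iio x₀) := by rw [hm, add_zero]
  · have hbpos : 0 < b x₀ := ENNReal.toReal_pos hm (hfin _)
    have ha_le : a x₀ ≤ e := ENNReal.toReal_le_of_le_ofReal he0 h3
    have he_le : e ≤ a x₀ + b x₀ := by
      rw [← hIic_toReal]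
      exact (ENNReal.ofReal_le_iff_le_toReal (hfin _)).mp h2
    have hκx0 : κ x₀ = ENNReal.ofReal ((e - a x₀) / b x₀) := L4 hbpos ha_le he_le
    rw [hκx0]
    have hmul : ENNReal.ofReal ((e - a x₀) / b x₀) * P {x₀} = ENNReal.ofReal (e - a x₀) := by
      rw [show P {x₀} = ENNReal.ofReal (b x₀) from (ENNReal.ofReal_toReal (hfin _)).symm,
        ← ENNReal.ofReal_mul (div_nonneg (by linarith) hbpos.le),
        div_mul_cancel₀ _ (ne_of_gt hbpos)]
    rw [hmul, show P (Set.Iio x₀) = ENNReal.ofReal (a x₀) from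
      (ENNReal.ofReal_toReal (hfin _)).symm,
      ← ENNReal.ofReal_add ENNReal.toReal_nonneg (by linarith)]
    congr 1
    ring
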